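/- arXiv:alg-geom/9711018 — 3 statements merged into one kernel-verified Lean document; each statement's English description precedes it below -/
import Mathlib

section
/- Let $k$ be a field, $R = k[x,y]$, and let $M = R^2/\langle x e_1 - y e_0 \rangle$ be the quotient of the free module $R^2$ with basis $e_0, e_1$ by the submodule generated by $x e_1 - y e_0$. Then the dual module $M^\vee = \mathrm{Hom}_R(M, R)$ is a free $R$-module of rank $1$. -/
open MvPolynomial

/-- The Koszul relation element `x • e₁ - y • e₀` in `R² = Fin 2 → k[x,y]`. -/
noncomputable def koszulRel (k : Type*) [Field k] : Fin 2 → MvPolynomial (Fin 2) k :=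
  (X 0 : MvPolynomial (Fin 2) k) • (Pi.single 1 1 : Fin 2 → MvPolynomial (Fin 2) k)
    - (X 1 : MvPolynomial (Fin 2) k) • (Pi.single 0 1 : Fin 2 → MvPolynomial (Fin 2) k)

lemma prime_X0 (k : Type*) [Field k] : Prime (X 0 : MvPolynomial (Fin 2) k) := by
  rw [← MulEquiv.prime_iff (p := (X 0 : MvPolynomial (Fin 2) k)) (MvPolynomial.finSuccEquiv k 1).toMulEquiv]
  have : (MvPolynomial.finSuccEquiv k 1).toMulEquiv (X 0) = Polynomial.X :=
    MvPolynomial.finSuccEquiv_X_zero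
  rw [this]
  exact Polynomial.prime_X

theorem stmt2 (k : Type*) [Field k] :
    Nonempty
      (Module.Dual (MvPolynomial (Fin 2) k)
          ((Fin 2 → MvPolynomial (Fin 2) k) ⧸
            Submodule.span (MvPolynomial (Fin 2) k) {koszulRel k})
        ≃ₗ[MvPolynomial (Fin 2) k] MvPolynomial (Fin 2) k) := by
  classical
  set R := MvPolynomial (Fin 2) k with hR
  set W : Submodule R (Fin 2 → R) := Submodule.span R {koszulRel k} with hW
  -- the linear functional w ↦ x * w 0 + y * w 1 on R²
  set g : (Fin 2 → R) →ₗ[R] R :=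
    (X 0 : R) • LinearMap.proj 0 + (X 1 : R) • LinearMap.proj 1 with hg
  have hgapp : ∀ w : Fin 2 → R, g w = X 0 * w 0 + X 1 * w 1 := by
    intro w
    simp [hg, smul_eq_mul]
  have hker : W ≤ LinearMap.ker g := by
    rw [hW, Submodule.span_le, Set.singleton_subset_iff]
    simp only [SetLike.mem_coe, LinearMap.mem_ker]
    rw [hgapp]
    simp [koszulRel, Pi.single_apply]
    ring
  set φ₁ : Module.Dual R ((Fin 2 → R) ⧸ W) := W.liftQ g hker with hφ₁
  set ψ : R →ₗ[R] Module.Dual R ((Fin 2 → R) ⧸ W) :=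
    LinearMap.toSpanSingleton R _ φ₁ with hψ
  have hψapp : ∀ (c : R) (w : Fin 2 → R),
      ψ c (Submodule.Quotient.mk w) = c * (X 0 * w 0 + X 1 * w 1) := by
    intro c w
    rw [hψ, LinearMap.toSpanSingleton_apply, LinearMap.smul_apply, hφ₁,
      Submodule.liftQ_apply, hgapp, smul_eq_mul]
  have hX0 : (X 0 : R) ≠ 0 := MvPolynomial.X_ne_zero 0
  have hinj : Function.Injective ψ := by
    intro c c' h
    have h0 : ψ c (Submodule.Quotient.mk (Pi.single 0 1)) =
        ψ c' (Submodule.Quotient.mk (Pi.single 0 1)) := by rw [h]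
    rw [hψapp, hψapp] at h0
    simp only [Pi.single_eq_same, Pi.single_eq_of_ne (by decide : (1 : Fin 2) ≠ 0),
      mul_one, mul_zero, add_zero] at h0
    exact mul_right_cancel₀ hX0 h0
  have hsurj : Function.Surjective ψ := by
    intro φ
    set φ' : (Fin 2 → R) →ₗ[R] R := φ.comp W.mkQ with hφ'
    set a : R := φ' (Pi.single 0 1) with ha
    set b : R := φ' (Pi.single 1 1) with hb
    have hv : φ' (koszulRel k) = 0 := by
      have hmem : koszulRel k ∈ W := Submodule.mem_span_singleton_self _
      rw [hφ', LinearMap.comp_apply, Submodule.mkQ_apply,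
        (Submodule.Quotient.mk_eq_zero W).mpr hmem, map_zero]
    have hrel : X 0 * b = X 1 * a := by
      have : φ' ((X 0 : R) • (Pi.single 1 1 : Fin 2 → R))
          - φ' ((X 1 : R) • (Pi.single 0 1 : Fin 2 → R)) = 0 := by
        rw [← map_sub]; exact hv
      rw [map_smul, map_smul, smul_eq_mul, smul_eq_mul, ← ha, ← hb, sub_eq_zero] at this
      exact this
    have hdvd : (X 0 : R) ∣ X 1 * a := ⟨b, hrel.symm⟩
    have hcases := (prime_X0 k).2.2 _ _ hdvd
    have hnd : ¬ (X 0 : R) ∣ X 1 := by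
      rw [MvPolynomial.X_dvd_X]
      decide
    have hda : (X 0 : R) ∣ a := hcases.resolve_left hnd
    obtain ⟨c, hc⟩ := hda
    have hbc : b = X 1 * c := by
      have : X 0 * b = X 0 * (X 1 * c) := by
        rw [hrel, hc]; ring
      exact mul_left_cancel₀ hX0 this
    refine ⟨c, ?_⟩
    apply LinearMap.ext
    intro m
    obtain ⟨w, rfl⟩ := W.mkQ_surjective m
    rw [Submodule.mkQ_apply, hψapp]
    have hw : φ (Submodule.Quotient.mk w) = φ' w := rfl
    rw [hw, LinearMap.pi_apply_eq_sum_univ φ' w, Fin.sum_univ_two]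
    have e0 : (fun j => if (0 : Fin 2) = j then (1 : R) else 0) = Pi.single 0 1 := by
      funext j; simp [Pi.single_apply, eq_comm]
    have e1 : (fun j => if (1 : Fin 2) = j then (1 : R) else 0) = Pi.single 1 1 := by
      funext j; simp [Pi.single_apply, eq_comm]
    rw [e0, e1, ← ha, ← hb, hc, hbc, smul_eq_mul, smul_eq_mul]
    ring
  exact ⟨(LinearEquiv.ofBijective ψ ⟨hinj, hsurj⟩).symm⟩
end

section
/- Let $k$ be a field, $R = k[x,y]$, and $M = R^2/\langle x e_1 - y e_0 \rangle$. The cokernel of the canonical evaluation map $\rho : M \to M^{\vee\vee}$ into the double dual has dimension $1$ as a $k$-vector space. -/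
open MvPolynomial

namespace Stmt3Aux

variable (k : Type*) [Field k]

local notation "R" => MvPolynomial (Fin 2) k
local notation "N" => Submodule.span (MvPolynomial (Fin 2) k) {koszulRel k}
local notation "M" => (Fin 2 → MvPolynomial (Fin 2) k) ⧸
    Submodule.span (MvPolynomial (Fin 2) k) {koszulRel k}

noncomputable def ψ : (Fin 2 → R) →ₗ[R] R :=
  (X 0 : R) • LinearMap.proj 0 + (X 1 : R) • LinearMap.proj 1

lemma ψ_apply (v : Fin 2 → R) : ψ k v = X 0 * v 0 + X 1 * v 1 := by
  simp [ψ, smul_eq_mul]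

lemma ψ_koszul : ψ k (koszulRel k) = 0 := by
  simp [ψ_apply, koszulRel, Pi.single_apply]
  ring

noncomputable def φ₁ : M →ₗ[R] R :=
  Submodule.liftQ _ (ψ k) (by
    rw [Submodule.span_le, Set.singleton_subset_iff]
    exact LinearMap.mem_ker.2 (ψ_koszul k))

lemma φ₁_mk (v : Fin 2 → R) :
    φ₁ k (Submodule.Quotient.mk v) = X 0 * v 0 + X 1 * v 1 := by
  rw [φ₁, Submodule.liftQ_apply, ψ_apply]

lemma primeX0 : Prime (X 0 : R) := by
  have h := (MulEquiv.prime_iff (MvPolynomial.finSuccEquiv k 1).toMulEquiv (p := (X 0 : R))).symm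
  have hx : (MvPolynomial.finSuccEquiv k 1).toMulEquiv (X 0) = Polynomial.X :=
    MvPolynomial.finSuccEquiv_X_zero
  rw [h, hx]
  exact Polynomial.prime_X

lemma X0_ndvd_X1 : ¬ (X 0 : R) ∣ X 1 := by
  rintro ⟨c, hc⟩
  have := congrArg (eval ![0, 1]) hc
  simp at this

noncomputable def ε : R →ₗ[R] Module.Dual R M :=
  LinearMap.toSpanSingleton _ _ (φ₁ k)

lemma ε_apply (g : R) (m : M) : ε k g m = g * φ₁ k m := by
  simp [ε, LinearMap.toSpanSingleton, smul_eq_mul]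

lemma ε_injective : Function.Injective (ε k) := by
  have h0 : ∀ g : R, ε k g = 0 → g = 0 := by
    intro g hg
    have := congrFun (congrArg DFunLike.coe hg) (Submodule.Quotient.mk (Pi.single 0 1))
    rw [ε_apply, φ₁_mk] at this
    simp at this
    exact this
  intro a b hab
  have := h0 (a - b) (by rw [map_sub, hab, sub_self])
  exact sub_eq_zero.mp this

lemma ε_surjective : Function.Surjective (ε k) := by
  intro φ
  set a := φ (Submodule.Quotient.mk (Pi.single 0 1)) with ha
  set b := φ (Submodule.Quotient.mk (Pi.single 1 1)) with hb
  have hrel : X 0 * b = X 1 * a := by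
    have h0 : φ (Submodule.Quotient.mk (koszulRel k)) = 0 := by
      rw [(Submodule.Quotient.mk_eq_zero _).2 (Submodule.mem_span_singleton_self _), map_zero]
    rw [show (Submodule.Quotient.mk (koszulRel k) : M) = (X 0 : R) • Submodule.Quotient.mk (Pi.single 1 1)
        - (X 1 : R) • Submodule.Quotient.mk (Pi.single 0 1) by
          rw [koszulRel, Submodule.Quotient.mk_sub, Submodule.Quotient.mk_smul, Submodule.Quotient.mk_smul],
      map_sub, map_smul, map_smul, smul_eq_mul, smul_eq_mul, sub_eq_zero] at h0
    exact h0
  obtain ⟨g, hg⟩ : (X 0 : R) ∣ a := by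
    rcases (primeX0 k).2.2 (X 1) a ⟨b, hrel.symm⟩ with h | h
    · exact absurd h (X0_ndvd_X1 k)
    · exact h
  have hbg : b = X 1 * g := by
    have : X 0 * b = X 0 * (X 1 * g) := by rw [hrel, hg]; ring
    exact mul_left_cancel₀ (MvPolynomial.X_ne_zero 0) this
  refine ⟨g, ?_⟩
  have hq : (ε k g).comp (Submodule.mkQ _) = φ.comp (Submodule.mkQ _) := by
    refine Module.Basis.ext (Pi.basisFun (MvPolynomial (Fin 2) k) (Fin 2)) ?_
    intro i
    fin_cases i <;>
      simp [Pi.basisFun_apply, ε_apply, φ₁_mk, ← ha, ← hb, hg, hbg] <;> ring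
  refine LinearMap.ext fun m => ?_
  obtain ⟨v, rfl⟩ := Submodule.Quotient.mk_surjective _ m
  exact congrFun (congrArg DFunLike.coe hq) v

noncomputable def E : R ≃ₗ[R] Module.Dual R M :=
  LinearEquiv.ofBijective (ε k) ⟨ε_injective k, ε_surjective k⟩

noncomputable def F : Module.Dual R (Module.Dual R M) ≃ₗ[R] R :=
  (E k).dualMap.trans (LinearMap.ringLmapEquivSelf _ _ _)

lemma F_eval (m : M) :
    F k (Module.Dual.eval R _ m) = φ₁ k m := by
  show (Module.Dual.eval R _ m) ((E k) 1) = φ₁ k m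
  show (E k) 1 m = φ₁ k m
  show ε k 1 m = φ₁ k m
  rw [ε_apply, one_mul]

lemma range_φ₁ :
    LinearMap.range (φ₁ k) = Submodule.span R {(X 0 : R), X 1} := by
  rw [φ₁, Submodule.range_liftQ]
  apply le_antisymm
  · rintro _ ⟨v, rfl⟩
    rw [ψ_apply]
    refine add_mem ?_ ?_
    · rw [mul_comm]
      exact Submodule.smul_mem _ _ (Submodule.subset_span (by simp))
    · rw [mul_comm]
      exact Submodule.smul_mem _ _ (Submodule.subset_span (by simp))
  · rw [Submodule.span_le]
    rintro z (rfl | rfl)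
    · exact ⟨Pi.single 0 1, by rw [ψ_apply]; simp⟩
    · exact ⟨Pi.single 1 1, by rw [ψ_apply]; simp⟩

noncomputable def quotEquiv :
    (Module.Dual R (Module.Dual R M) ⧸ LinearMap.range (Module.Dual.eval R M)) ≃ₗ[R]
      (R ⧸ Submodule.span R {(X 0 : R), X 1}) :=
  Submodule.Quotient.equiv _ _ (F k) (by
    have h1 : (F k).toLinearMap ∘ₗ Module.Dual.eval R M = φ₁ k :=
      LinearMap.ext (F_eval k)
    change Submodule.map (F k).toLinearMap _ = _
    rw [← LinearMap.range_comp, h1, range_φ₁])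

lemma span_pair_eq :
    Submodule.span R {(X 0 : R), X 1}
      = Ideal.span (MvPolynomial.X '' (Set.univ : Set (Fin 2))) := by
  rw [Set.image_univ]
  congr 1
  ext z
  simp [Fin.exists_fin_two, eq_comm]

lemma mem_span_of_constantCoeff {p : R} (hp : constantCoeff p = 0) :
    p ∈ Submodule.span R {(X 0 : R), X 1} := by
  rw [span_pair_eq]
  rw [MvPolynomial.mem_ideal_span_X_image]
  intro m hm
  have hne : m ≠ 0 := by
    rintro rfl
    exact (MvPolynomial.mem_support_iff.1 hm) hp
  obtain ⟨i, hi⟩ := Finsupp.ne_iff.1 hne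
  exact ⟨i, Set.mem_univ i, hi⟩

lemma constantCoeff_of_mem_span {p : R}
    (hp : p ∈ Submodule.span R {(X 0 : R), X 1}) : constantCoeff p = 0 := by
  refine Submodule.span_induction ?_ ?_ ?_ ?_ hp
  · rintro x (rfl | rfl) <;> simp
  · simp
  · intro x y _ _ hx hy; simp [hx, hy]
  · intro r x _ hx; simp [smul_eq_mul, hx]

noncomputable def cc : R →ₗ[k] k :=
  (MvPolynomial.aeval (fun _ : Fin 2 => (0 : k))).toLinearMap

lemma cc_apply (p : R) : cc k p = constantCoeff p := by
  have : (fun _ : Fin 2 => (0 : k)) = (0 : Fin 2 → k) := rfl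
  simp [cc, this, MvPolynomial.aeval_zero']

noncomputable def ccQ :
    (R ⧸ (Submodule.span R {(X 0 : R), X 1}).restrictScalars k) →ₗ[k] k :=
  Submodule.liftQ _ (cc k) (by
    intro x hx
    rw [LinearMap.mem_ker, cc_apply]
    exact constantCoeff_of_mem_span k hx)

lemma ccQ_bijective : Function.Bijective (ccQ k) := by
  constructor
  · rw [← LinearMap.ker_eq_bot, ccQ]
    rw [Submodule.ker_liftQ_eq_bot]
    intro p hp
    rw [LinearMap.mem_ker, cc_apply] at hp
    exact mem_span_of_constantCoeff k hp
  · rw [← LinearMap.range_eq_top, ccQ, Submodule.range_liftQ]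
    rw [LinearMap.range_eq_top]
    intro c
    exact ⟨C c, by rw [cc_apply]; simp⟩

lemma finrank_quot_span : Module.finrank k (R ⧸ Submodule.span R {(X 0 : R), X 1}) = 1 := by
  rw [← (Submodule.Quotient.restrictScalarsEquiv k
      (Submodule.span R {(X 0 : R), X 1})).finrank_eq]
  rw [(LinearEquiv.ofBijective (ccQ k) (ccQ_bijective k)).finrank_eq]
  exact Module.finrank_self k

end Stmt3Aux

theorem stmt3 (k : Type*) [Field k] :
    Module.finrank k
      ((Module.Dual (MvPolynomial (Fin 2) k)
          (Module.Dual (MvPolynomial (Fin 2) k)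
            ((Fin 2 → MvPolynomial (Fin 2) k) ⧸
              Submodule.span (MvPolynomial (Fin 2) k) {koszulRel k}))) ⧸
        LinearMap.range
          (Module.Dual.eval (MvPolynomial (Fin 2) k)
            ((Fin 2 → MvPolynomial (Fin 2) k) ⧸
              Submodule.span (MvPolynomial (Fin 2) k) {koszulRel k}))) = 1 := by
  rw [((Stmt3Aux.quotEquiv k).restrictScalars k).finrank_eq]
  exact Stmt3Aux.finrank_quot_span k
end

section
/- Let $k$ be a field, $R = k[x,y]$, and $M = (R^2/\langle x e_1 - y e_0\rangle) \oplus R$. Then the cokernel of the natural evaluation map $M \to M^{\vee\vee}$ has $k$-dimension $1$. -/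
open MvPolynomial

/-- `M = (R²/(x e₁ - y e₀)) ⊕ R`. -/
abbrev Mmod (k : Type*) [Field k] :=
  (((Fin 2 → MvPolynomial (Fin 2) k) ⧸
      Submodule.span (MvPolynomial (Fin 2) k) {koszulRel k}) × MvPolynomial (Fin 2) k)

section
variable (k : Type*) [Field k]

noncomputable abbrev Rk := MvPolynomial (Fin 2) k
noncomputable abbrev Nk := (Fin 2 → Rk k) ⧸ Submodule.span (Rk k) {koszulRel k}

theorem primeX0 : Prime (X 0 : Rk k) := by
  rw [← MulEquiv.prime_iff (MvPolynomial.finSuccEquiv k 1).toMulEquiv]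
  show Prime (MvPolynomial.finSuccEquiv k 1 (X 0))
  rw [finSuccEquiv_X_zero]
  exact Polynomial.prime_X

theorem notdvd : ¬ (X 0 : Rk k) ∣ (X 1 : Rk k) := by
  intro h
  have := map_dvd (eval (fun i : Fin 2 => if i = 0 then (0:k) else 1)) h
  simp at this

noncomputable def δ0 : (Fin 2 → Rk k) →ₗ[Rk k] Rk k :=
  (X 0 : Rk k) • (LinearMap.proj 0 : (Fin 2 → Rk k) →ₗ[Rk k] Rk k)
    + (X 1 : Rk k) • (LinearMap.proj 1 : (Fin 2 → Rk k) →ₗ[Rk k] Rk k)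

lemma δ0_apply (v : Fin 2 → Rk k) : δ0 k v = X 0 * v 0 + X 1 * v 1 := by
  simp [δ0, smul_eq_mul]

lemma δ0_rel : δ0 k (koszulRel k) = 0 := by
  rw [δ0_apply]
  simp [koszulRel]
  ring

noncomputable def δbar : Nk k →ₗ[Rk k] Rk k :=
  Submodule.liftQ _ (δ0 k) (by
    rw [Submodule.span_le, Set.singleton_subset_iff]
    exact LinearMap.mem_ker.2 (δ0_rel k))

lemma δbar_mk (v : Fin 2 → Rk k) :
    δbar k (Submodule.Quotient.mk v) = X 0 * v 0 + X 1 * v 1 := δ0_apply k v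

noncomputable def ε : Rk k →ₗ[Rk k] Module.Dual (Rk k) (Nk k) :=
  LinearMap.toSpanSingleton (Rk k) _ (δbar k)

lemma ε_apply (c : Rk k) (v : Fin 2 → Rk k) :
    ε k c (Submodule.Quotient.mk v) = c * (X 0 * v 0 + X 1 * v 1) := by
  simp [ε, LinearMap.toSpanSingleton, δbar_mk, smul_eq_mul]

lemma ε_bij : Function.Bijective (ε k) := by
  constructor
  · intro c d h
    have := congrArg (fun f => f (Submodule.Quotient.mk (Pi.single 0 1 : Fin 2 → Rk k))) h
    simp only [ε_apply] at this
    simp only [Pi.single_eq_same, Pi.single_eq_of_ne (by decide : (1:Fin 2) ≠ 0), mul_one,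
      mul_zero, add_zero] at this
    exact mul_right_cancel₀ (MvPolynomial.X_ne_zero 0) this
  · intro φ
    set a := φ (Submodule.Quotient.mk (Pi.single 0 1 : Fin 2 → Rk k)) with ha
    set b := φ (Submodule.Quotient.mk (Pi.single 1 1 : Fin 2 → Rk k)) with hb
    have hrel : φ (Submodule.Quotient.mk (koszulRel k)) = 0 := by
      rw [(Submodule.Quotient.mk_eq_zero _).2 (Submodule.mem_span_singleton_self _)]
      exact map_zero φ
    have hxy : (X 0 : Rk k) * b - X 1 * a = 0 := by
      have : Submodule.Quotient.mk (p := Submodule.span (Rk k) {koszulRel k}) (koszulRel k)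
          = (X 0 : Rk k) • Submodule.Quotient.mk (Pi.single 1 1 : Fin 2 → Rk k)
            - (X 1 : Rk k) • Submodule.Quotient.mk (Pi.single 0 1 : Fin 2 → Rk k) := by
        rw [koszulRel, Submodule.Quotient.mk_sub, Submodule.Quotient.mk_smul,
          Submodule.Quotient.mk_smul]
      rw [this, map_sub, map_smul, map_smul] at hrel
      simpa [smul_eq_mul, ← ha, ← hb] using hrel
    have hdvd : (X 0 : Rk k) ∣ X 1 * a := ⟨b, by linear_combination -hxy⟩
    have hxa : (X 0 : Rk k) ∣ a := by
      rcases (primeX0 k).2.2 _ _ hdvd with h | h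
      · exact absurd h (notdvd k)
      · exact h
    obtain ⟨c, hc⟩ := hxa
    refine ⟨c, ?_⟩
    have hbc : b = X 1 * c := by
      apply mul_left_cancel₀ (MvPolynomial.X_ne_zero (R := k) (0 : Fin 2))
      rw [show (X 0 : Rk k) * b = X 1 * a by linear_combination hxy, hc]
      ring
    apply LinearMap.ext
    intro n
    obtain ⟨v, rfl⟩ := Submodule.Quotient.mk_surjective _ n
    have hv : v = v 0 • (Pi.single 0 1 : Fin 2 → Rk k) + v 1 • (Pi.single 1 1 : Fin 2 → Rk k) := by
      funext i
      fin_cases i <;> simp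
    rw [ε_apply, hv, Submodule.Quotient.mk_add, Submodule.Quotient.mk_smul,
      Submodule.Quotient.mk_smul, map_add, map_smul, map_smul, ← ha, ← hb, hc, hbc,
      smul_eq_mul, smul_eq_mul]
    simp
    ring

noncomputable abbrev Mk := Nk k × Rk k

noncomputable def eN : Module.Dual (Rk k) (Nk k) ≃ₗ[Rk k] Rk k :=
  (LinearEquiv.ofBijective (ε k) (ε_bij k)).symm

noncomputable def eR : Module.Dual (Rk k) (Rk k) ≃ₗ[Rk k] Rk k :=
  LinearMap.ringLmapEquivSelf (Rk k) (Rk k) (Rk k)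

noncomputable def eDual : Module.Dual (Rk k) (Mk k) ≃ₗ[Rk k] Rk k × Rk k :=
  (Module.dualProdDualEquivDual (Rk k) (Nk k) (Rk k)).symm ≪≫ₗ (eN k).prodCongr (eR k)

noncomputable def Φ : Module.Dual (Rk k) (Module.Dual (Rk k) (Mk k)) ≃ₗ[Rk k] Rk k × Rk k :=
  (eDual k).symm.dualMap ≪≫ₗ (Module.dualProdDualEquivDual (Rk k) (Rk k) (Rk k)).symm
    ≪≫ₗ (eR k).prodCongr (eR k)

lemma Φ_eval (m : Mk k) :
    Φ k (Module.Dual.eval (Rk k) (Mk k) m) = (δbar k m.1, m.2) := by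
  refine Prod.ext ?_ ?_ <;>
    simp [Φ, eDual, eN, eR, ε, Module.Dual.eval_apply, LinearMap.toSpanSingleton,
      LinearEquiv.prodCongr_symm, LinearEquiv.prodCongr_apply, LinearEquiv.symm_symm,
      LinearEquiv.ofBijective_apply, LinearMap.ringLmapEquivSelf_symm_apply,
      LinearMap.smulRight_apply, LinearMap.id_apply]

noncomputable def Ik : Ideal (Rk k) := Ideal.span {(X 0 : Rk k), X 1}

lemma range_δbar : LinearMap.range (δbar k) = (Ik k : Submodule (Rk k) (Rk k)) := by
  ext p
  rw [Ik, Ideal.span, Submodule.mem_span_pair]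
  constructor
  · rintro ⟨n, rfl⟩
    obtain ⟨v, rfl⟩ := Submodule.Quotient.mk_surjective _ n
    exact ⟨v 0, v 1, by rw [δbar_mk]; simp [smul_eq_mul]; ring⟩
  · rintro ⟨a, b, rfl⟩
    exact ⟨Submodule.Quotient.mk ![a, b], by rw [δbar_mk]; simp [smul_eq_mul]; ring⟩

lemma range_eval_map :
    (LinearMap.range (Module.Dual.eval (Rk k) (Mk k))).map (Φ k).toLinearMap
      = Submodule.prod (Ik k : Submodule (Rk k) (Rk k)) ⊤ := by
  ext ⟨a, b⟩
  simp only [Submodule.mem_map, LinearMap.mem_range, Submodule.mem_prod, Submodule.mem_top,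
    and_true]
  constructor
  · rintro ⟨f, ⟨m, rfl⟩, hf⟩
    rw [LinearEquiv.coe_coe, Φ_eval] at hf
    rw [← range_δbar]
    exact ⟨m.1, congrArg Prod.fst hf⟩
  · intro ha
    rw [← range_δbar] at ha
    obtain ⟨n, hn⟩ := ha
    exact ⟨Module.Dual.eval (Rk k) (Mk k) (n, b), ⟨(n, b), rfl⟩, by rw [LinearEquiv.coe_coe, Φ_eval, hn]⟩


noncomputable def πk : (Rk k × Rk k) →ₗ[Rk k] (Rk k ⧸ (Ik k : Submodule (Rk k) (Rk k))) :=
  (Ik k : Submodule (Rk k) (Rk k)).mkQ.comp (LinearMap.fst _ _ _)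

lemma ker_πk : LinearMap.ker (πk k) = Submodule.prod (Ik k : Submodule (Rk k) (Rk k)) ⊤ := by
  ext ⟨a, b⟩
  simp only [LinearMap.mem_ker, πk, LinearMap.comp_apply, LinearMap.fst_apply,
    Submodule.mkQ_apply, Submodule.Quotient.mk_eq_zero, Submodule.mem_prod,
    Submodule.mem_top, and_true]

lemma πk_surj : Function.Surjective (πk k) :=
  (Submodule.mkQ_surjective _).comp (Prod.fst_surjective)

noncomputable def Ebig :
    ((Module.Dual (Rk k) (Module.Dual (Rk k) (Mk k))) ⧸
        LinearMap.range (Module.Dual.eval (Rk k) (Mk k)))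
      ≃ₗ[Rk k] (Rk k ⧸ (Ik k : Submodule (Rk k) (Rk k))) :=
  (Submodule.Quotient.equiv _ _ (Φ k) (range_eval_map k)) ≪≫ₗ
    (Submodule.quotEquivOfEq _ _ (ker_πk k).symm) ≪≫ₗ
    ((πk k).quotKerEquivOfSurjective (πk_surj k))

noncomputable def evk : Rk k →ₐ[k] k := aeval (fun _ : Fin 2 => (0 : k))

lemma evk_surj : Function.Surjective (evk k) := fun c => ⟨C c, by simp [evk]⟩

lemma Ik_eq_ker : Ik k = RingHom.ker (evk k) := by
  have himg : (MvPolynomial.X '' (Set.univ : Set (Fin 2)) : Set (Rk k)) = {X 0, X 1} := by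
    ext q
    simp only [Set.image_univ, Set.mem_range, Set.mem_insert_iff, Set.mem_singleton_iff]
    constructor
    · rintro ⟨i, rfl⟩; fin_cases i <;> simp
    · rintro (rfl | rfl) <;> [exact ⟨0, rfl⟩; exact ⟨1, rfl⟩]
  ext p
  rw [Ik, ← himg, mem_ideal_span_X_image]
  have : p ∈ RingHom.ker (evk k) ↔ constantCoeff p = 0 := by
    simp [RingHom.mem_ker, evk]
  rw [this, constantCoeff_eq]
  rw [show ((coeff 0 p : k) = 0) ↔ (0 : Fin 2 →₀ ℕ) ∉ p.support by simp [mem_support_iff]]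
  constructor
  · intro h h0
    obtain ⟨i, -, hi⟩ := h 0 h0
    exact hi rfl
  · intro h m hm
    have : m ≠ 0 := fun e => h (e ▸ hm)
    obtain ⟨i, hi⟩ := Finsupp.ne_iff.1 this
    exact ⟨i, Set.mem_univ i, by simpa using hi⟩

noncomputable def Efin : (Rk k ⧸ (Ik k : Submodule (Rk k) (Rk k))) ≃ₗ[k] k :=
  ((Ideal.quotientEquivAlgOfEq k (Ik_eq_ker k)).trans
    (Ideal.quotientKerAlgEquivOfSurjective (evk_surj k))).toLinearEquiv

end
theorem stmt12 (k : Type*) [Field k] :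
    Module.finrank k
      ((Module.Dual (MvPolynomial (Fin 2) k)
          (Module.Dual (MvPolynomial (Fin 2) k) (Mmod k))) ⧸
        LinearMap.range (Module.Dual.eval (MvPolynomial (Fin 2) k) (Mmod k))) = 1 := by
  rw [((Ebig k).restrictScalars k).finrank_eq, (Efin k).finrank_eq, Module.finrank_self]
end
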